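/- Let t be real with |t| ≤ T where 0 < T < π/2. Then |sin t − t·cos(T/2)| ≤ sin(T/2) − (T/2)·cos(T/2). -/

import Mathlib

open Real Set

-- key inequality: 3 s ≤ 2 sin s + tan s on [0, π/2)
lemma aux_tan (s : ℝ) (h0 : 0 ≤ s) (h2 : s < Real.pi / 2) :
    3 * s ≤ 2 * Real.sin s + Real.tan s := by
  have hsub : Icc (0:ℝ) s ⊆ Ioo (-(Real.pi/2)) (Real.pi/2) := by
    intro x hx
    exact ⟨by nlinarith [Real.pi_pos, hx.1], lt_of_le_of_lt hx.2 h2⟩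
  have hcos : ∀ x ∈ Icc (0:ℝ) s, 0 < Real.cos x := fun x hx =>
    Real.cos_pos_of_mem_Ioo (hsub hx)
  have key : MonotoneOn (fun x => 2 * Real.sin x + Real.tan x - 3 * x) (Icc 0 s) := by
    have hderiv : ∀ x ∈ Icc (0:ℝ) s,
        HasDerivAt (fun x => 2 * Real.sin x + Real.tan x - 3 * x)
          (2 * Real.cos x + 1 / Real.cos x ^ 2 - 3) x := by
      intro x hx
      have h1 := (Real.hasDerivAt_sin x).const_mul 2
      have h2 := Real.hasDerivAt_tan (ne_of_gt (hcos x hx))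
      have h3 := ((h1.add h2).sub ((hasDerivAt_id x).const_mul 3))
      exact h3.congr_deriv (by ring)
    apply monotoneOn_of_deriv_nonneg (convex_Icc 0 s)
    · exact fun x hx => ((hderiv x hx).continuousAt).continuousWithinAt
    · intro x hx
      rw [interior_Icc] at hx
      exact ((hderiv x (Ioo_subset_Icc_self hx)).differentiableAt).differentiableWithinAt
    · intro x hx
      rw [interior_Icc] at hx
      have hx' := Ioo_subset_Icc_self hx
      rw [(hderiv x hx').deriv]
      have hc := hcos x hx'
      have hc1 : Real.cos x ≤ 1 := Real.cos_le_one x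
      have : 0 ≤ (1 - Real.cos x)^2 * (2 * Real.cos x + 1) := by positivity
      have hc2 : (0:ℝ) < Real.cos x ^ 2 := by positivity
      rw [div_eq_mul_inv]
      have : 2 * Real.cos x + 1 * (Real.cos x ^ 2)⁻¹ - 3
          = (2 * Real.cos x ^ 3 - 3 * Real.cos x ^ 2 + 1) / Real.cos x ^ 2 := by
        field_simp; ring
      rw [this]
      apply div_nonneg _ (le_of_lt hc2)
      nlinarith [sq_nonneg (1 - Real.cos x)]
  have h := key (left_mem_Icc.mpr h0) (right_mem_Icc.mpr h0) h0
  simp at h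
  linarith

theorem sin_band (t T : ℝ) (hT0 : 0 < T) (hT : T < Real.pi / 2)
    (ht : |t| ≤ T) :
    |Real.sin t - t * Real.cos (T / 2)| ≤ Real.sin (T / 2) - (T / 2) * Real.cos (T / 2) := by
  set s := T / 2 with hs
  set c := Real.cos s with hc
  have hs0 : 0 < s := by positivity
  have hsπ : s < Real.pi / 2 := by
    have := Real.pi_pos; simp only [hs]; linarith
  have hcpos : 0 < c := Real.cos_pos_of_mem_Ioo ⟨by linarith, hsπ⟩
  have haux := aux_tan s (le_of_lt hs0) hsπ
  have htan : Real.tan s = Real.sin s / c := Real.tan_eq_sin_div_cos s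
  -- M ≥ 0
  have hsin_le : Real.sin s ≤ s := Real.sin_le (le_of_lt hs0)
  have hM0 : 0 ≤ Real.sin s - s * c := by
    have h1 : s ≤ Real.tan s := by linarith
    have : s * c ≤ Real.tan s * c := by nlinarith
    rw [htan] at this
    rw [div_mul_cancel₀ _ (ne_of_gt hcpos)] at this
    linarith
  -- g(T) ≥ -M
  have hgT : Real.sin T - T * c ≥ -(Real.sin s - s * c) := by
    have hT2 : T = 2 * s := by rw [hs]; ring
    rw [hT2, Real.sin_two_mul]
    have h1 : 3 * s * c ≤ (2 * Real.sin s + Real.tan s) * c := by nlinarith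
    rw [add_mul, htan, div_mul_cancel₀ _ (ne_of_gt hcpos)] at h1
    nlinarith
  -- monotone on [0, s]
  have hmono : MonotoneOn (fun x => Real.sin x - x * c) (Icc 0 s) := by
    have hderiv : ∀ x : ℝ, HasDerivAt (fun x => Real.sin x - x * c) (Real.cos x - c) x := by
      intro x
      exact ((Real.hasDerivAt_sin x).sub ((hasDerivAt_id x).mul_const c)).congr_deriv (by ring)
    apply monotoneOn_of_deriv_nonneg (convex_Icc 0 s)
    · exact fun x _ => ((hderiv x).continuousAt).continuousWithinAt
    · exact fun x _ => ((hderiv x).differentiableAt).differentiableWithinAt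
    · intro x hx
      rw [interior_Icc] at hx
      rw [(hderiv x).deriv, sub_nonneg, hc]
      exact Real.cos_le_cos_of_nonneg_of_le_pi (le_of_lt hx.1) (by linarith [Real.pi_pos]) (le_of_lt hx.2)
  -- antitone on [s, T]
  have hanti : AntitoneOn (fun x => Real.sin x - x * c) (Icc s T) := by
    have hderiv : ∀ x : ℝ, HasDerivAt (fun x => Real.sin x - x * c) (Real.cos x - c) x := by
      intro x
      exact ((Real.hasDerivAt_sin x).sub ((hasDerivAt_id x).mul_const c)).congr_deriv (by ring)
    apply antitoneOn_of_deriv_nonpos (convex_Icc s T)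
    · exact fun x _ => ((hderiv x).continuousAt).continuousWithinAt
    · exact fun x _ => ((hderiv x).differentiableAt).differentiableWithinAt
    · intro x hx
      rw [interior_Icc] at hx
      rw [(hderiv x).deriv, sub_nonpos, hc]
      exact Real.cos_le_cos_of_nonneg_of_le_pi (le_of_lt hs0) (by linarith [Real.pi_pos, hx.2]) (le_of_lt hx.1)
  -- bounds for nonneg x
  have key : ∀ x : ℝ, 0 ≤ x → x ≤ T →
      |Real.sin x - x * c| ≤ Real.sin s - s * c := by
    intro x hx0 hxT
    rw [abs_le]
    constructor
    · -- lower bound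
      rcases le_total x s with h | h
      · have := hmono (left_mem_Icc.mpr (le_of_lt hs0)) ⟨hx0, h⟩ hx0
        simp at this
        linarith
      · have := hanti ⟨h, hxT⟩ (right_mem_Icc.mpr (by linarith)) hxT
        simp only at this
        linarith
    · rcases le_total x s with h | h
      · have := hmono ⟨hx0, h⟩ (right_mem_Icc.mpr (le_of_lt hs0)) h
        simpa using this
      · have := hanti (left_mem_Icc.mpr (by linarith)) ⟨h, hxT⟩ h
        simpa using this
  rcases le_total 0 t with h | h
  · exact key t h (by rwa [abs_of_nonneg h] at ht)
  · have h1 : |t| = -t := abs_of_nonpos h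
    have := key (-t) (by linarith) (by rw [h1] at ht; linarith)
    rw [Real.sin_neg] at this
    calc |Real.sin t - t * c| = |-(Real.sin t - t * c)| := (abs_neg _).symm
    _ = |(-Real.sin t - -t * c)| := by ring_nf
    _ ≤ _ := this
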